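/- For every acute triangle ABC, the point X₀ inside the triangle for which the Steinhaus partition has all three areas equal to |△ABC|/3 is unique: if X ≠ X₀ is any other point of the triangle, then some area P(V,X) is strictly less than |△ABC|/3. -/

import Mathlib

open MeasureTheory Real EuclideanGeometry
open scoped RealInnerProductSpace

def tri (A B C : EuclideanSpace ℝ (Fin 2)) : Set (EuclideanSpace ℝ (Fin 2)) :=
  convexHull ℝ {A, B, C}

/-- The region of the Steinhaus partition of triangle `ABC` (determined by the
perpendiculars through `X` to the side lines) that contains the vertex `A`. -/
def steinRegion (A B C X : EuclideanSpace ℝ (Fin 2)) : Set (EuclideanSpace ℝ (Fin 2)) :=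
  tri A B C ∩ {Y | (inner ℝ (Y - X) (B - A) : ℝ) ≤ 0 ∧ (inner ℝ (Y - X) (C - A) : ℝ) ≤ 0}

/-- `sP A B C X` is the area of the Steinhaus region at vertex `A`;
the areas at `B` and `C` are `sP B A C X` and `sP C A B X`. -/
noncomputable def sP (A B C X : EuclideanSpace ℝ (Fin 2)) : ℝ :=
  (volume (steinRegion A B C X)).toReal

noncomputable def triArea (A B C : EuclideanSpace ℝ (Fin 2)) : ℝ :=
  (volume (tri A B C)).toReal

def Acute (A B C : EuclideanSpace ℝ (Fin 2)) : Prop :=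
  ∠ B A C < π/2 ∧ ∠ A B C < π/2 ∧ ∠ B C A < π/2

section Aux

local notation "E2" => EuclideanSpace ℝ (Fin 2)

/-- A hyperplane has measure zero. -/
lemma hyperplane_volume_zero (w : E2) (hw : w ≠ 0) (c : ℝ) :
    volume {Y : E2 | ⟪Y, w⟫ = c} = 0 := by
  set K : Submodule ℝ E2 := LinearMap.ker (innerSL ℝ w : E2 →ₗ[ℝ] ℝ) with hK
  have hwK : w ∉ K := by
    simp only [hK, LinearMap.mem_ker, ContinuousLinearMap.coe_coe, innerSL_apply_apply, inner_self_eq_zero]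
    exact hw
  have hKtop : K ≠ ⊤ := fun h => hwK (h ▸ Submodule.mem_top)
  have hww : (⟪w, w⟫ : ℝ) ≠ 0 := by
    rw [Ne, inner_self_eq_zero]; exact hw
  set Y₀ : E2 := (c / ⟪w, w⟫) • w with hY₀
  have hY₀w : ⟪Y₀, w⟫ = c := by
    rw [hY₀, real_inner_smul_left, div_mul_cancel₀ _ hww]
  have hset : {Y : E2 | ⟪Y, w⟫ = c} = (AffineSubspace.mk' Y₀ K : Set E2) := by
    ext Y
    simp only [Set.mem_setOf_eq, SetLike.mem_coe, AffineSubspace.mem_mk']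
    rw [vsub_eq_sub, hK]
    simp only [LinearMap.mem_ker, ContinuousLinearMap.coe_coe, innerSL_apply_apply]
    rw [inner_sub_right, real_inner_comm Y₀ w, hY₀w, sub_eq_zero, real_inner_comm Y w]
  rw [hset]
  exact Measure.addHaar_affineSubspace volume _ (by
    intro h
    apply hKtop
    rw [← AffineSubspace.direction_mk' Y₀ K, h, AffineSubspace.direction_top])

lemma tri_comm₁ (A B C : E2) : tri B A C = tri A B C := by
  unfold tri; rw [Set.insert_comm]

lemma tri_comm₂ (A B C : E2) : tri C A B = tri A B C := by
  unfold tri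
  congr 1
  ext x
  simp only [Set.mem_insert_iff, Set.mem_singleton_iff]
  tauto

lemma tri_swap (A B C : E2) : tri A C B = tri A B C := by
  unfold tri
  congr 1
  ext x
  simp only [Set.mem_insert_iff, Set.mem_singleton_iff]
  tauto

lemma convex_tri (A B C : E2) : Convex ℝ (tri A B C) := convex_convexHull ℝ _

lemma isCompact_tri (A B C : E2) : IsCompact (tri A B C) := by
  apply Set.Finite.isCompact_convexHull
  exact Set.toFinite _

lemma tri_volume_lt_top (A B C : E2) : volume (tri A B C) < ⊤ :=
  (isCompact_tri A B C).measure_lt_top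

/-- Rewriting the Steinhaus region with halfspaces. -/
lemma steinRegion_eq (A B C X : E2) :
    steinRegion A B C X =
      tri A B C ∩ {Y : E2 | ⟪Y, B - A⟫ ≤ ⟪X, B - A⟫} ∩ {Y : E2 | ⟪Y, C - A⟫ ≤ ⟪X, C - A⟫} := by
  unfold steinRegion
  ext Y
  simp only [Set.mem_inter_iff, Set.mem_setOf_eq, inner_sub_left, sub_nonpos, and_assoc]

lemma steinRegion_swap (A B C X : E2) : steinRegion A C B X = steinRegion A B C X := by
  unfold steinRegion
  rw [tri_swap A B C]
  ext Y
  simp only [Set.mem_inter_iff, Set.mem_setOf_eq]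
  tauto

lemma convex_halfspaceInner (w : E2) (c : ℝ) : Convex ℝ {Y : E2 | ⟪Y, w⟫ ≤ c} := by
  refine convex_halfSpace_le ?_ c
  exact ⟨fun x y => inner_add_left x y w, fun r x => real_inner_smul_left x w r⟩

lemma convex_steinRegion (A B C X : E2) : Convex ℝ (steinRegion A B C X) := by
  rw [steinRegion_eq]
  exact ((convex_tri A B C).inter (convex_halfspaceInner _ _)).inter (convex_halfspaceInner _ _)

lemma steinRegion_subset (A B C X : E2) : steinRegion A B C X ⊆ tri A B C :=
  Set.inter_subset_left

lemma steinRegion_volume_lt_top (A B C X : E2) : volume (steinRegion A B C X) < ⊤ :=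
  lt_of_le_of_lt (measure_mono (steinRegion_subset A B C X)) (tri_volume_lt_top A B C)

/-- The three Steinhaus regions cover the triangle. -/
lemma stein_cover (A B C X : E2) :
    steinRegion A B C X ∪ steinRegion B A C X ∪ steinRegion C A B X = tri A B C := by
  apply Set.Subset.antisymm
  · refine Set.union_subset (Set.union_subset ?_ ?_) ?_
    · exact steinRegion_subset A B C X
    · rw [← tri_comm₁ A B C]; exact steinRegion_subset B A C X
    · rw [← tri_comm₂ A B C]; exact steinRegion_subset C A B X
  · intro Y hY
    simp only [Set.mem_union, steinRegion, Set.mem_inter_iff, Set.mem_setOf_eq,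
      tri_comm₁ A B C, tri_comm₂ A B C]
    have hab := inner_sub_right (𝕜 := ℝ) (Y - X) B A
    have hac := inner_sub_right (𝕜 := ℝ) (Y - X) C A
    have hba := inner_sub_right (𝕜 := ℝ) (Y - X) A B
    have hcb := inner_sub_right (𝕜 := ℝ) (Y - X) C B
    have hca := inner_sub_right (𝕜 := ℝ) (Y - X) A C
    have hbc := inner_sub_right (𝕜 := ℝ) (Y - X) B C
    rcases le_total (⟪Y - X, B⟫ : ℝ) (⟪Y - X, A⟫ : ℝ) with h1 | h1 <;>
      rcases le_total (⟪Y - X, C⟫ : ℝ) (⟪Y - X, A⟫ : ℝ) with h2 | h2 <;>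
      rcases le_total (⟪Y - X, C⟫ : ℝ) (⟪Y - X, B⟫ : ℝ) with h3 | h3
    · exact Or.inl (Or.inl ⟨hY, by linarith, by linarith⟩)
    · exact Or.inl (Or.inl ⟨hY, by linarith, by linarith⟩)
    · exact Or.inl (Or.inl ⟨hY, by linarith, by linarith⟩)
    · exact Or.inr ⟨hY, by linarith, by linarith⟩
    · exact Or.inl (Or.inr ⟨hY, by linarith, by linarith⟩)
    · exact Or.inr ⟨hY, by linarith, by linarith⟩
    · exact Or.inl (Or.inr ⟨hY, by linarith, by linarith⟩)
    · exact Or.inr ⟨hY, by linarith, by linarith⟩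

/-- Pairwise a.e. disjointness via hyperplanes. -/
lemma stein_aedisjoint (A B C X : E2) (hBA : B ≠ A) :
    AEDisjoint volume (steinRegion A B C X) (steinRegion B A C X) := by
  have hsub : steinRegion A B C X ∩ steinRegion B A C X ⊆
      {Y : E2 | ⟪Y, B - A⟫ = ⟪X, B - A⟫} := by
    rintro Y ⟨⟨-, h1, -⟩, ⟨-, h2, -⟩⟩
    rw [← neg_sub B A, inner_neg_right, neg_nonpos] at h2
    have h3 : (⟪Y - X, B - A⟫ : ℝ) = 0 := le_antisymm h1 h2
    rw [inner_sub_left, sub_eq_zero] at h3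
    exact h3
  have hnull : volume (steinRegion A B C X ∩ steinRegion B A C X) = 0 :=
    measure_mono_null hsub (hyperplane_volume_zero (B - A) (sub_ne_zero.mpr hBA) _)
  exact hnull

/-- The area identity. -/
lemma stein_sum (A B C X : E2) (hBA : B ≠ A) (hCA : C ≠ A) (hCB : C ≠ B) :
    sP A B C X + sP B A C X + sP C A B X = triArea A B C := by
  have hAB' := stein_aedisjoint A B C X hBA
  have hAC' : AEDisjoint volume (steinRegion A B C X) (steinRegion C A B X) := by
    have h := stein_aedisjoint A C B X hCA
    rwa [steinRegion_swap A B C X] at h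
  have hBC' : AEDisjoint volume (steinRegion B A C X) (steinRegion C A B X) := by
    have h := stein_aedisjoint B C A X hCB
    rwa [steinRegion_swap B A C X, steinRegion_swap C A B X] at h
  have hnm : ∀ P Q R Z : E2, NullMeasurableSet (steinRegion P Q R Z) volume :=
    fun P Q R Z => (convex_steinRegion P Q R Z).nullMeasurableSet _
  have hvol : volume (steinRegion A B C X) + volume (steinRegion B A C X)
      + volume (steinRegion C A B X) = volume (tri A B C) := by
    rw [← measure_union₀ (hnm B A C X) hAB', ← measure_union₀ (hnm C A B X)
      (AEDisjoint.union_left hAC' hBC'), stein_cover]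
  have h1 := (steinRegion_volume_lt_top A B C X).ne
  have h2 := (steinRegion_volume_lt_top B A C X).ne
  have h3 := (steinRegion_volume_lt_top C A B X).ne
  unfold sP triArea
  rw [← ENNReal.toReal_add h1 h2, ← ENNReal.toReal_add (by finiteness) h3, hvol]

/-- Key strict monotonicity lemma. -/
lemma key_strict (S : Set E2) (hSc : Convex ℝ S) (hScp : IsCompact S)
    (w₁ w₂ : E2) {c d c' d' : ℝ} (hc' : c' < c) (hd' : d' ≤ d)
    (p : E2) (hpS : p ∈ S) (hpc : ⟪p, w₁⟫ = c) (hpd : ⟪p, w₂⟫ ≤ d)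
    (hpos : 0 < volume (S ∩ {Y : E2 | ⟪Y, w₁⟫ ≤ c} ∩ {Y : E2 | ⟪Y, w₂⟫ ≤ d})) :
    volume (S ∩ {Y : E2 | ⟪Y, w₁⟫ ≤ c'} ∩ {Y : E2 | ⟪Y, w₂⟫ ≤ d'}) <
      volume (S ∩ {Y : E2 | ⟪Y, w₁⟫ ≤ c} ∩ {Y : E2 | ⟪Y, w₂⟫ ≤ d}) := by
  set K : Set E2 := S ∩ {Y : E2 | ⟪Y, w₁⟫ ≤ c} ∩ {Y : E2 | ⟪Y, w₂⟫ ≤ d} with hKdef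
  set K' : Set E2 := S ∩ {Y : E2 | ⟪Y, w₁⟫ ≤ c'} ∩ {Y : E2 | ⟪Y, w₂⟫ ≤ d'} with hK'def
  have hKconv : Convex ℝ K :=
    (hSc.inter (convex_halfspaceInner w₁ c)).inter (convex_halfspaceInner w₂ d)
  have hKfin : volume K < ⊤ :=
    lt_of_le_of_lt (measure_mono (fun Y hY => hY.1.1)) hScp.measure_lt_top
  have hKint : (interior K).Nonempty := by
    by_contra hemp
    rw [Set.not_nonempty_iff_eq_empty] at hemp
    have hKsub : K ⊆ frontier K := by
      rw [frontier, hemp, Set.diff_empty]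
      exact subset_closure
    have h0 : volume K = 0 :=
      measure_mono_null hKsub (hKconv.addHaar_frontier volume)
    exact hpos.ne' h0
  obtain ⟨q, hq⟩ := hKint
  have hpK : p ∈ K := ⟨⟨hpS, le_of_eq hpc⟩, hpd⟩
  have hqK : q ∈ K := interior_subset hq
  have hqc : (⟪q, w₁⟫ : ℝ) ≤ c := hqK.1.2
  set M : ℝ := c - ⟪q, w₁⟫ with hM
  have hM0 : 0 ≤ M := by rw [hM]; exact sub_nonneg.mpr hqc
  set δ : ℝ := c - c' with hδ
  have hδ0 : 0 < δ := by rw [hδ]; exact sub_pos.mpr hc'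
  set t : ℝ := δ / (M + δ) with ht
  have hMδ : 0 < M + δ := by linarith
  have ht0 : 0 < t := div_pos hδ0 hMδ
  have ht1 : t ≤ 1 := by
    rw [ht, div_le_one hMδ]; linarith
  set r : E2 := t • q + (1 - t) • p with hr
  have hrint : r ∈ interior K :=
    hKconv.combo_interior_self_mem_interior hq hpK ht0 (by linarith) (by ring)
  have hrc : c' < ⟪r, w₁⟫ := by
    have hcomp : (⟪r, w₁⟫ : ℝ) = t * ⟪q, w₁⟫ + (1 - t) * ⟪p, w₁⟫ := by
      rw [hr, inner_add_left, real_inner_smul_left, real_inner_smul_left]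
    rw [hcomp, hpc]
    have htM : t * (M + δ) = δ := by
      rw [ht]; field_simp
    have hqw : (⟪q, w₁⟫ : ℝ) = c - M := by rw [hM]; ring
    rw [hqw]
    nlinarith [mul_nonneg ht0.le hM0]
  set V : Set E2 := interior K ∩ {Y : E2 | c' < ⟪Y, w₁⟫} with hV
  have hVopen : IsOpen V := by
    apply isOpen_interior.inter
    have hcont : Continuous fun Y : E2 => (⟪Y, w₁⟫ : ℝ) :=
      (continuous_id.inner continuous_const)
    exact isOpen_lt continuous_const hcont
  have hrV : r ∈ V := ⟨hrint, hrc⟩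
  have hVK : V ⊆ K := fun Y hY => interior_subset hY.1
  have hK'K : K' ⊆ K := fun Y hY =>
    ⟨⟨hY.1.1, le_trans hY.1.2 hc'.le⟩, le_trans hY.2 hd'⟩
  have hdisj : Disjoint K' V := by
    rw [Set.disjoint_left]
    rintro Y hY hYV
    have ha : (⟪Y, w₁⟫ : ℝ) ≤ c' := hY.1.2
    have hb : c' < (⟪Y, w₁⟫ : ℝ) := hYV.2
    linarith
  have hVpos : 0 < volume V := hVopen.measure_pos volume ⟨r, hrV⟩
  have hle : volume K' + volume V ≤ volume K := by
    rw [← measure_union hdisj hVopen.measurableSet]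
    exact measure_mono (Set.union_subset hK'K hVK)
  have hK'fin : volume K' ≠ ⊤ := (lt_of_le_of_lt (measure_mono hK'K) hKfin).ne
  calc volume K' < volume K' + volume V := ENNReal.lt_add_right hK'fin hVpos.ne'
    _ ≤ volume K := hle

/-- Monotonicity of the Steinhaus region at `A`, strict version. -/
lemma stein_lt (A B C X₀ X : E2) (hX₀ : X₀ ∈ tri A B C)
    (hpos : 0 < volume (steinRegion A B C X₀))
    (hu : (⟪X, B - A⟫ : ℝ) ≤ ⟪X₀, B - A⟫) (hv : (⟪X, C - A⟫ : ℝ) ≤ ⟪X₀, C - A⟫)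
    (hstrict : (⟪X, B - A⟫ : ℝ) < ⟪X₀, B - A⟫ ∨ (⟪X, C - A⟫ : ℝ) < ⟪X₀, C - A⟫) :
    volume (steinRegion A B C X) < volume (steinRegion A B C X₀) := by
  rw [steinRegion_eq A B C X₀] at hpos
  rw [steinRegion_eq A B C X, steinRegion_eq A B C X₀]
  rcases hstrict with hs | hs
  · exact key_strict (tri A B C) (convex_tri A B C) (isCompact_tri A B C)
      (B - A) (C - A) hs hv X₀ hX₀ rfl le_rfl hpos
  · rw [Set.inter_right_comm (tri A B C) _ _,
      Set.inter_right_comm (tri A B C) {Y : E2 | ⟪Y, B - A⟫ ≤ ⟪X₀, B - A⟫} _]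
    refine key_strict (tri A B C) (convex_tri A B C) (isCompact_tri A B C)
      (C - A) (B - A) hs hu X₀ hX₀ rfl le_rfl ?_
    rw [Set.inter_right_comm] at hpos
    exact hpos

end Aux

theorem equal_areas_point_unique (A B C X₀ X : EuclideanSpace ℝ (Fin 2))
    (h : AffineIndependent ℝ ![A, B, C]) (hac : Acute A B C)
    (hX₀ : X₀ ∈ tri A B C)
    (heq : sP A B C X₀ = triArea A B C / 3 ∧ sP B A C X₀ = triArea A B C / 3 ∧ sP C A B X₀ = triArea A B C / 3)
    (hX : X ∈ tri A B C) (hne : X ≠ X₀) :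
    min (sP A B C X) (min (sP B A C X) (sP C A B X)) < triArea A B C / 3 := by
  classical
  have hinj : Function.Injective ![A, B, C] := h.injective
  have hBA : B ≠ A := fun hh => (by decide : (1 : Fin 3) ≠ 0) (hinj (by simpa using hh))
  have hCA : C ≠ A := fun hh => (by decide : (2 : Fin 3) ≠ 0) (hinj (by simpa using hh))
  have hCB : C ≠ B := fun hh => (by decide : (2 : Fin 3) ≠ 1) (hinj (by simpa using hh))
  -- the triangle has positive area
  have hrange : Set.range ![A, B, C] = ({A, B, C} : Set (EuclideanSpace ℝ (Fin 2))) := by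
    ext x
    simp only [Set.mem_range, Set.mem_insert_iff, Set.mem_singleton_iff]
    constructor
    · rintro ⟨i, rfl⟩; fin_cases i <;> simp
    · rintro (rfl | rfl | rfl)
      exacts [⟨0, rfl⟩, ⟨1, rfl⟩, ⟨2, rfl⟩]
  have hspan : affineSpan ℝ ({A, B, C} : Set (EuclideanSpace ℝ (Fin 2))) = ⊤ := by
    rw [← hrange]
    rw [h.affineSpan_eq_top_iff_card_eq_finrank_add_one]
    simp [finrank_euclideanSpace_fin]
  have hTpos : 0 < triArea A B C := by
    have hint : (interior (tri A B C)).Nonempty := by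
      rw [(convex_tri A B C).interior_nonempty_iff_affineSpan_eq_top,
        tri, affineSpan_convexHull]
      exact hspan
    have hp := Measure.measure_pos_of_nonempty_interior volume hint
    unfold triArea
    exact ENNReal.toReal_pos hp.ne' (tri_volume_lt_top A B C).ne
  -- the sum identity
  have hsum := stein_sum A B C X hBA hCA hCB
  -- contradiction setup
  by_contra hcon
  push_neg at hcon
  rw [le_min_iff, le_min_iff] at hcon
  obtain ⟨hA3, hB3, hC3⟩ := hcon
  have hAe : sP A B C X = triArea A B C / 3 := by linarith
  have hBe : sP B A C X = triArea A B C / 3 := by linarith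
  have hCe : sP C A B X = triArea A B C / 3 := by linarith
  -- positivity of the regions at X₀
  have hposgen : ∀ P Q R : EuclideanSpace ℝ (Fin 2), sP P Q R X₀ = triArea A B C / 3 →
      0 < volume (steinRegion P Q R X₀) := by
    intro P Q R hPQ
    rw [pos_iff_ne_zero]
    intro h0
    unfold sP at hPQ
    rw [h0] at hPQ
    simp only [ENNReal.toReal_zero] at hPQ
    linarith
  -- contradiction helper
  have contra : ∀ P Q R : EuclideanSpace ℝ (Fin 2), sP P Q R X = triArea A B C / 3 →
      sP P Q R X₀ = triArea A B C / 3 →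
      volume (steinRegion P Q R X) < volume (steinRegion P Q R X₀) → False := by
    intro P Q R h1 h2 hlt
    have hlt' := (ENNReal.toReal_lt_toReal (steinRegion_volume_lt_top P Q R X).ne
      (steinRegion_volume_lt_top P Q R X₀).ne).mpr hlt
    change sP P Q R X < sP P Q R X₀ at hlt'
    rw [h1, h2] at hlt'
    exact lt_irrefl _ hlt'
  -- abbreviations
  set a1 : ℝ := ⟪X, B - A⟫ with ha1
  set a2 : ℝ := ⟪X₀, B - A⟫ with ha2
  set b1 : ℝ := ⟪X, C - A⟫ with hb1
  set b2 : ℝ := ⟪X₀, C - A⟫ with hb2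
  -- nondegeneracy of the displacement
  have huv : ¬(a1 = a2 ∧ b1 = b2) := by
    rintro ⟨hu0, hv0⟩
    apply hne
    rw [← sub_eq_zero]
    have hd1 : (⟪X - X₀, B - A⟫ : ℝ) = 0 := by
      rw [inner_sub_left, ← ha1, ← ha2, hu0, sub_self]
    have hd2 : (⟪X - X₀, C - A⟫ : ℝ) = 0 := by
      rw [inner_sub_left, ← hb1, ← hb2, hv0, sub_self]
    have hvs : Submodule.span ℝ ({B - A, C - A} : Set (EuclideanSpace ℝ (Fin 2))) = ⊤ := by
      have htop : vectorSpan ℝ ({A, B, C} : Set (EuclideanSpace ℝ (Fin 2))) = ⊤ := by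
        rw [← direction_affineSpan, hspan, AffineSubspace.direction_top]
      refine le_antisymm le_top ?_
      rw [← htop, vectorSpan_def, Submodule.span_le]
      rintro z hz
      rw [Set.mem_vsub] at hz
      obtain ⟨x, hx, y, hy, rfl⟩ := hz
      have hmem : ∀ w ∈ ({A, B, C} : Set (EuclideanSpace ℝ (Fin 2))),
          w - A ∈ Submodule.span ℝ ({B - A, C - A} : Set (EuclideanSpace ℝ (Fin 2))) := by
        rintro w (rfl | rfl | rfl)
        · simp
        · exact Submodule.subset_span (Set.mem_insert _ _)
        · exact Submodule.subset_span (Set.mem_insert_of_mem _ rfl)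
      have hxy : x -ᵥ y = (x - A) - (y - A) := by rw [vsub_eq_sub]; abel
      rw [hxy]
      exact Submodule.sub_mem _ (hmem x hx) (hmem y hy)
    have hall : ∀ z ∈ Submodule.span ℝ ({B - A, C - A} :
        Set (EuclideanSpace ℝ (Fin 2))), (⟪X - X₀, z⟫ : ℝ) = 0 := by
      intro z hz
      induction hz using Submodule.span_induction with
      | mem w hw =>
          rcases hw with rfl | hw
          · exact hd1
          · rw [Set.mem_singleton_iff] at hw; subst hw; exact hd2
      | zero => exact inner_zero_right _
      | add x y hx hy hx' hy' => rw [inner_add_right, hx', hy', add_zero]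
      | smul r x hx hx' => rw [real_inner_smul_right, hx', mul_zero]
    have hz := hall (X - X₀) (by rw [hvs]; exact Submodule.mem_top)
    exact inner_self_eq_zero.mp hz
  -- inner product identities
  have eB1 : ∀ Z : EuclideanSpace ℝ (Fin 2), (⟪Z, A - B⟫ : ℝ) = -⟪Z, B - A⟫ := fun Z => by
    rw [← neg_sub B A, inner_neg_right]
  have eB2 : ∀ Z : EuclideanSpace ℝ (Fin 2),
      (⟪Z, C - B⟫ : ℝ) = ⟪Z, C - A⟫ - ⟪Z, B - A⟫ := fun Z => by
    rw [← sub_sub_sub_cancel_right C B A, inner_sub_right]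
  have eC1 : ∀ Z : EuclideanSpace ℝ (Fin 2), (⟪Z, A - C⟫ : ℝ) = -⟪Z, C - A⟫ := fun Z => by
    rw [← neg_sub C A, inner_neg_right]
  have eC2 : ∀ Z : EuclideanSpace ℝ (Fin 2),
      (⟪Z, B - C⟫ : ℝ) = ⟪Z, B - A⟫ - ⟪Z, C - A⟫ := fun Z => by
    rw [← sub_sub_sub_cancel_right B C A, inner_sub_right]
  have hX₀B : X₀ ∈ tri B A C := by rw [tri_comm₁ A B C]; exact hX₀
  have hX₀C : X₀ ∈ tri C A B := by rw [tri_comm₂ A B C]; exact hX₀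
  -- the vertex-B strict inequality
  have vertexB : a2 < a1 → b1 - a1 ≤ b2 - a2 → False := by
    intro h1 h2
    refine contra B A C hBe heq.2.1 ?_
    refine stein_lt B A C X₀ X hX₀B (hposgen B A C heq.2.1) ?_ ?_ (Or.inl ?_)
    · rw [eB1 X, eB1 X₀, ← ha1, ← ha2]; linarith
    · rw [eB2 X, eB2 X₀, ← ha1, ← ha2, ← hb1, ← hb2]; linarith
    · rw [eB1 X, eB1 X₀, ← ha1, ← ha2]; linarith
  -- the vertex-C strict inequality
  have vertexC : b2 < b1 → a1 - b1 ≤ a2 - b2 → False := by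
    intro h1 h2
    refine contra C A B hCe heq.2.2 ?_
    refine stein_lt C A B X₀ X hX₀C (hposgen C A B heq.2.2) ?_ ?_ (Or.inl ?_)
    · rw [eC1 X, eC1 X₀, ← hb1, ← hb2]; linarith
    · rw [eC2 X, eC2 X₀, ← ha1, ← ha2, ← hb1, ← hb2]; linarith
    · rw [eC1 X, eC1 X₀, ← hb1, ← hb2]; linarith
  rcases le_or_gt a1 a2 with hA1 | hA1 <;> rcases le_or_gt b1 b2 with hB1 | hB1
  · -- vertex A
    have hstrict : a1 < a2 ∨ b1 < b2 := by
      rcases hA1.lt_or_eq with hs | hs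
      · exact Or.inl hs
      rcases hB1.lt_or_eq with hs' | hs'
      · exact Or.inr hs'
      exact absurd ⟨hs, hs'⟩ huv
    exact contra A B C hAe heq.1
      (stein_lt A B C X₀ X hX₀ (hposgen A B C heq.1) hA1 hB1 hstrict)
  · exact vertexC hB1 (by linarith)
  · exact vertexB hA1 (by linarith)
  · rcases le_total (a1 - a2) (b1 - b2) with hcmp | hcmp
    · exact vertexC hB1 (by linarith)
    · exact vertexB hA1 (by linarith)
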